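/- If each agent i truthfully reports a piecewise-constant density and agent i instead reports any piecewise-constant f_i' whose set of discontinuity points contains the discontinuity points of the true f_i, then in the exact-division algorithm (Algorithm 2 with shifted orders), agent i still receives a piece worth exactly (1/n) of their true total value; i.e., such a misreport yields no strict gain. -/

import Mathlib

open MeasureTheory Set

lemma int_Ico_const (a b c : ℝ) (hab : a ≤ b) (f : ℝ → ℝ)
    (h : ∀ t ∈ Set.Ioo a b, f t = c) : ∫ t in Set.Ico a b, f t = c * (b - a) := by
  rw [MeasureTheory.integral_Ico_eq_integral_Ioo,
    MeasureTheory.setIntegral_congr_fun measurableSet_Ioo h, MeasureTheory.setIntegral_const,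
    measureReal_def, Real.volume_Ioo, ENNReal.toReal_ofReal (by linarith), smul_eq_mul]
  ring

lemma int_Ioc_const (a b c : ℝ) (hab : a ≤ b) (f : ℝ → ℝ)
    (h : ∀ t ∈ Set.Ioo a b, f t = c) : ∫ t in Set.Ioc a b, f t = c * (b - a) := by
  rw [MeasureTheory.integral_Ioc_eq_integral_Ioo,
    MeasureTheory.setIntegral_congr_fun measurableSet_Ioo h, MeasureTheory.setIntegral_const,
    measureReal_def, Real.volume_Ioo, ENNReal.toReal_ofReal (by linarith), smul_eq_mul]
  ring

/-- The value of set `X` under value density function `f`. -/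
noncomputable def val (f : ℝ → ℝ) (X : Set ℝ) : ℝ := ∫ t in X, f t

/-- In Algorithm 2 (exact division with shifted orders), if agent `i`'s true density is
constant on every cell of the refined partition determined by the reports (which holds
whenever the discontinuities of the true density are contained in those of the report),
then agent `i`'s piece is worth exactly `1/n` of their true total value: such a misreport
yields no strict gain. -/
theorem shifted_exact_division_no_gain
    (n m : ℕ) (hn : 0 < n) (hm : 0 < m)
    (x : ℕ → ℝ) (hx0 : x 0 = 0) (hxm : x m = 1)
    (hmono : ∀ j < m, x j < x (j + 1))
    (i : ℕ) (hi : i < n)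
    (fi : ℝ → ℝ) (hmeas : Measurable fi) (hnn : ∀ t, 0 ≤ fi t)
    -- the true density is constant on each open cell of the refined partition
    (hconst : ∀ j < m, ∀ y ∈ Set.Ioo (x j) (x (j + 1)), ∀ z ∈ Set.Ioo (x j) (x (j + 1)),
      fi y = fi z)
    (A : Set ℝ)
    (hA : A = ⋃ j ∈ Finset.range m,
      Set.Ico (x j + (((i + j) % n : ℕ) : ℝ) / n * (x (j + 1) - x j))
              (x j + ((((i + j) % n : ℕ) : ℝ) + 1) / n * (x (j + 1) - x j))) :
    val fi A = (1 / n) * val fi (Set.Icc 0 1) := by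
  have hn' : (0:ℝ) < n := by exact_mod_cast hn
  set k : ℕ → ℝ := fun j => (((i + j) % n : ℕ) : ℝ) with hk
  set a : ℕ → ℝ := fun j => x j + k j / n * (x (j + 1) - x j) with ha
  set b : ℕ → ℝ := fun j => x j + (k j + 1) / n * (x (j + 1) - x j) with hb
  set c : ℕ → ℝ := fun j => fi ((x j + x (j + 1)) / 2) with hc
  have hk0 : ∀ j, 0 ≤ k j := fun j => Nat.cast_nonneg _
  have hk1 : ∀ j, k j + 1 ≤ n := by
    intro j
    have : (i + j) % n < n := Nat.mod_lt _ hn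
    simp only [hk]
    exact_mod_cast this
  have hdiff : ∀ j, b j - a j = (x (j + 1) - x j) / n := by
    intro j; simp only [ha, hb]; field_simp; ring
  have hsub : ∀ j < m, Set.Ioo (a j) (b j) ⊆ Set.Ioo (x j) (x (j + 1)) := by
    intro j hj
    have hΔ : 0 < x (j + 1) - x j := by linarith [hmono j hj]
    apply Set.Ioo_subset_Ioo
    · have : 0 ≤ k j / n * (x (j + 1) - x j) := by positivity
      simp only [ha]; linarith
    · have h1 : (k j + 1) / n ≤ 1 := by rw [div_le_one hn']; exact hk1 j
      have : (k j + 1) / n * (x (j + 1) - x j) ≤ 1 * (x (j + 1) - x j) :=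
        mul_le_mul_of_nonneg_right h1 (le_of_lt hΔ)
      simp only [hb]; linarith
  have hab : ∀ j < m, a j ≤ b j := by
    intro j hj
    have hΔ : 0 < x (j + 1) - x j := by linarith [hmono j hj]
    have := hdiff j
    have : 0 ≤ b j - a j := by rw [this]; positivity
    linarith
  -- the midpoint is in the open cell
  have hmid : ∀ j < m, (x j + x (j + 1)) / 2 ∈ Set.Ioo (x j) (x (j + 1)) := by
    intro j hj
    have := hmono j hj
    exact ⟨by linarith, by linarith⟩
  -- value of each cell and each subinterval
  have hcell : ∀ j < m, ∫ t in Set.Ioc (x j) (x (j + 1)), fi t = c j * (x (j + 1) - x j) := by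
    intro j hj
    exact int_Ioc_const _ _ _ (le_of_lt (hmono j hj)) fi
      (fun t ht => hconst j hj t ht _ (hmid j hj))
  have hpiece : ∀ j < m, ∫ t in Set.Ico (a j) (b j), fi t = c j * ((x (j + 1) - x j) / n) := by
    intro j hj
    rw [int_Ico_const _ _ (c j) (hab j hj) fi
      (fun t ht => hconst j hj t (hsub j hj ht) _ (hmid j hj)), hdiff j]
  -- bounds of the subinterval within the cell
  have haxa : ∀ j < m, x j ≤ a j := by
    intro j hj
    have hΔ : 0 < x (j + 1) - x j := by linarith [hmono j hj]
    have : 0 ≤ k j / n * (x (j + 1) - x j) := by positivity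
    simp only [ha]; linarith
  have hbxb : ∀ j < m, b j ≤ x (j + 1) := by
    intro j hj
    have hΔ : 0 < x (j + 1) - x j := by linarith [hmono j hj]
    have h1 : (k j + 1) / n ≤ 1 := by rw [div_le_one hn']; exact hk1 j
    have : (k j + 1) / n * (x (j + 1) - x j) ≤ 1 * (x (j + 1) - x j) :=
      mul_le_mul_of_nonneg_right h1 (le_of_lt hΔ)
    simp only [hb]; linarith
  -- integrability
  have hintIoo : ∀ j < m, IntegrableOn fi (Set.Ioo (x j) (x (j + 1))) := by
    intro j hj
    have hconst' : IntegrableOn (fun _ => c j) (Set.Ioo (x j) (x (j + 1))) volume :=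
      integrableOn_const (by rw [Real.volume_Ioo]; exact ENNReal.ofReal_ne_top)
    exact hconst'.congr_fun (fun t ht => (hconst j hj t ht _ (hmid j hj)).symm) measurableSet_Ioo
  have hint : ∀ j < m, IntegrableOn fi (Set.Ioc (x j) (x (j + 1))) := by
    intro j hj
    exact (hintIoo j hj).congr_set_ae Ioo_ae_eq_Ioc.symm
  have hintp : ∀ j < m, IntegrableOn fi (Set.Ico (a j) (b j)) := by
    intro j hj
    exact ((hintIoo j hj).mono_set (hsub j hj)).congr_set_ae Ioo_ae_eq_Ico.symm
  -- monotonicity of x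
  have hle : ∀ j j', j ≤ j' → j' ≤ m → x j ≤ x j' := by
    intro j j' hjj' hj'm
    induction j' with
    | zero => have : j = 0 := Nat.le_zero.mp hjj'; simp [this]
    | succ p ih =>
      rcases Nat.lt_or_ge j (p + 1) with h | h
      · have hxp : x p < x (p + 1) := hmono p (by omega)
        have := ih (by omega) (by omega)
        linarith
      · have : j = p + 1 := by omega
        exact le_of_eq (by rw [this])
  -- pairwise disjointness of the pieces
  have hkey : ∀ p q, p < q → q < m → Disjoint (Set.Ico (a p) (b p)) (Set.Ico (a q) (b q)) := by
    intro p q hpq hq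
    have hp : p < m := lt_trans hpq hq
    have h1 : b p ≤ x (p + 1) := hbxb p hp
    have h2 : x (p + 1) ≤ x q := hle _ _ (by omega) (by omega)
    have h3 : x q ≤ a q := haxa q hq
    apply Set.disjoint_left.mpr
    rintro t ⟨_, ht2⟩ ⟨ht3, _⟩
    linarith
  have hdisj : (↑(Finset.range m) : Set ℕ).Pairwise
      (Function.onFun Disjoint fun j => Set.Ico (a j) (b j)) := by
    intro p hp q hq hpq
    simp only [Finset.coe_range, Set.mem_Iio] at hp hq
    rcases lt_or_gt_of_ne hpq with h | h
    · exact hkey p q h hq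
    · exact (hkey q p h hp).symm
  -- rewrite A
  have hA' : A = ⋃ j ∈ Finset.range m, Set.Ico (a j) (b j) := by
    rw [hA]
  -- left side
  have hL : val fi A = ∑ j ∈ Finset.range m, c j * ((x (j + 1) - x j) / n) := by
    rw [val, hA', MeasureTheory.integral_biUnion_finset _ (fun j _ => measurableSet_Ico) hdisj
      (fun j hj => hintp j (Finset.mem_range.mp hj))]
    exact Finset.sum_congr rfl fun j hj => hpiece j (Finset.mem_range.mp hj)
  -- right side
  have hR : val fi (Set.Icc 0 1) = ∑ j ∈ Finset.range m, c j * (x (j + 1) - x j) := by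
    have hii : ∀ j < m, IntervalIntegrable fi volume (x j) (x (j + 1)) := fun j hj =>
      (intervalIntegrable_iff_integrableOn_Ioc_of_le (le_of_lt (hmono j hj))).2 (hint j hj)
    have hsum := intervalIntegral.sum_integral_adjacent_intervals (μ := volume) (a := x) hii
    have h01 : (0:ℝ) ≤ 1 := by norm_num
    rw [val, MeasureTheory.integral_Icc_eq_integral_Ioc, ← intervalIntegral.integral_of_le h01,
      ← hx0, ← hxm, ← hsum]
    refine Finset.sum_congr rfl fun j hj => ?_
    rw [intervalIntegral.integral_of_le (le_of_lt (hmono j (Finset.mem_range.mp hj)))]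
    exact hcell j (Finset.mem_range.mp hj)
  rw [hL, hR, Finset.mul_sum]
  exact Finset.sum_congr rfl fun j _ => by ring
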